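/- Under the construction setup with 1 ≤ r ≤ 𝔫, set δ := 𝔫 − r + 1, and for a non-negative integer ∂ and positive integers n_r, n_c define B(∂, n_r, n_c) := max{ 𝔫² − ∂ + (𝔫 − n_r)(𝔫 − n_c), n_r·δ, n_c·δ }. Then for every non-negative integer ∂ and every nonzero polynomial w ∈ span_F(B_{r²}) with deg(w) ≤ ∂, the number of points α ∈ Z_f ⊕ Z_g with w(α) ≠ 0 is at least min{ B(∂, n_r, n_c) : n_r, n_c integers with δ ≤ n_r ≤ 𝔫 and δ ≤ n_c ≤ 𝔫 }. In particular, the evaluation code on Z_f ⊕ Z_g of the polynomials in span_F(B_{r²}) of degree at most ∂ has minimum distance at least this minimum. -/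

import Mathlib

open Polynomial
open scoped Classical

/-- The point set `Z_f ⊕ Z_g = {β + γ : β ∈ Z_f, γ ∈ Z_g}`. -/
noncomputable def rootSumSet {F : Type*} [Field F] (f g : F[X]) : Finset F :=
  (f.roots.toFinset ×ˢ g.roots.toFinset).image fun p => p.1 + p.2

/-- The set `B_{r²} = {g^i f^j : 0 ≤ i, j ≤ r-1}` of polynomials. -/
def Bset {F : Type*} [Field F] (f g : F[X]) (r : ℕ) : Set F[X] :=
  {w | ∃ i j : ℕ, i < r ∧ j < r ∧ w = g ^ i * f ^ j}

/-- The linear evaluation map `F[X] → (S → F)` on a finite set `S` of points. -/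
noncomputable def evalOn {F : Type*} [Field F] (S : Finset F) : F[X] →ₗ[F] (↥S → F) :=
  LinearMap.pi fun α => Polynomial.leval (α : F)

/-- With `δ := 𝔫 - r + 1`, the set of values
`B(∂, n_r, n_c) = max{𝔫² − ∂ + (𝔫 − n_r)(𝔫 − n_c), n_r·δ, n_c·δ}` (computed in `ℤ`)
over all integers `δ ≤ n_r ≤ 𝔫` and `δ ≤ n_c ≤ 𝔫`. -/
def lbSet (𝔫 r D : ℕ) : Set ℤ :=
  {m : ℤ | ∃ nr nc : ℕ, 𝔫 - r + 1 ≤ nr ∧ nr ≤ 𝔫 ∧ 𝔫 - r + 1 ≤ nc ∧ nc ≤ 𝔫 ∧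
    m = max ((𝔫 : ℤ) ^ 2 - (D : ℤ) + ((𝔫 : ℤ) - (nr : ℤ)) * ((𝔫 : ℤ) - (nc : ℤ)))
          (max ((nr : ℤ) * ((𝔫 : ℤ) - (r : ℤ) + 1)) ((nc : ℤ) * ((𝔫 : ℤ) - (r : ℤ) + 1)))}

section Aux

open scoped Polynomial.Bivariate

lemma aux_prod_dvd {R ι : Type*} [CommRing R] [IsDomain R] (t : Finset ι) (v : ι → R)
    (hv : Set.InjOn v t) (p : R[X]) (h : ∀ a ∈ t, p.eval (v a) = 0) :
    (∏ a ∈ t, (X - C (v a))) ∣ p := by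
  classical
  induction t using Finset.induction generalizing p with
  | empty => simpa using one_dvd p
  | @insert a t ha ih =>
    obtain ⟨q, hq⟩ := (dvd_iff_isRoot (a := v a)).2 (h a (Finset.mem_insert_self a t))
    rw [Finset.prod_insert ha, hq]
    refine mul_dvd_mul_left _ (ih (fun x hx y hy => hv (Finset.mem_insert_of_mem hx)
      (Finset.mem_insert_of_mem hy)) q ?_)
    intro b hb
    have hba : v b - v a ≠ 0 := sub_ne_zero.2 fun hba =>
      ha (by rwa [hv (Finset.mem_insert_of_mem hb) (Finset.mem_insert_self a t) hba] at hb)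
    have := h b (Finset.mem_insert_of_mem hb)
    rw [hq, eval_mul, eval_sub, eval_X, eval_C] at this
    exact (mul_eq_zero.1 this).resolve_left hba

lemma aux_card_le_natDegree {R ι : Type*} [CommRing R] [IsDomain R] (t : Finset ι) (v : ι → R)
    (hv : Set.InjOn v t) (p : R[X]) (hp : p ≠ 0) (h : ∀ a ∈ t, p.eval (v a) = 0) :
    t.card ≤ p.natDegree := by
  have hd := aux_prod_dvd t v hv p h
  have hdeg := Polynomial.natDegree_le_of_dvd hd hp
  rwa [Polynomial.natDegree_prod _ _ (fun a _ => X_sub_C_ne_zero (v a)),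
    Finset.sum_congr rfl (fun a _ => natDegree_X_sub_C (v a)), Finset.sum_const,
    smul_eq_mul, mul_one] at hdeg

lemma aux_deriv {p e : ℕ} (hp : p.Prime) (he : 0 < e)
    {F : Type*} [Field F] [CharP F p] (f : F[X])
    (hflin : ∀ m ∈ f.support, ∃ i : ℕ, m = (p ^ e) ^ i) :
    derivative f = C (f.coeff 1) := by
  ext k
  rw [coeff_derivative, coeff_C]
  rcases k with _ | k
  · simp
  · simp only [Nat.succ_ne_zero, if_false]
    by_cases hmem : k + 1 + 1 ∈ f.support
    · obtain ⟨i, hi⟩ := hflin _ hmem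
      have hipos : 0 < i := by
        rcases Nat.eq_zero_or_pos i with hi0 | hipos
        · simp [hi0] at hi
        · exact hipos
      have hcast : ((k + 1 + 1 : ℕ) : F) = 0 := by
        rw [hi]
        push_cast
        rw [← pow_mul, CharP.cast_eq_zero F p, zero_pow (by positivity)]
      rw [show ((k + 1 : ℕ) : F) + 1 = ((k + 1 + 1 : ℕ) : F) by push_cast; ring, hcast, mul_zero]
    · rw [Polynomial.notMem_support_iff.1 hmem, zero_mul]

lemma aux_additive {p e : ℕ} (hp : p.Prime)
    {F : Type*} [Field F] [CharP F p] (f : F[X])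
    (hflin : ∀ m ∈ f.support, ∃ i : ℕ, m = (p ^ e) ^ i) (a b : F) :
    f.eval (a + b) = f.eval a + f.eval b := by
  haveI := Fact.mk hp
  rw [eval_eq_sum, eval_eq_sum, eval_eq_sum, Polynomial.sum_def, Polynomial.sum_def,
    Polynomial.sum_def, ← Finset.sum_add_distrib]
  refine Finset.sum_congr rfl fun m hm => ?_
  obtain ⟨i, hi⟩ := hflin m hm
  subst hi
  rw [← pow_mul, add_pow_char_pow, mul_add]

end Aux

lemma aux_arith (𝔫 r D N Rc Cc nr nc Zc du dw : ℕ)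
    (hr : 1 ≤ r) (hrn : r ≤ 𝔫)
    (hRc : Rc ≤ r - 1) (hCc : Cc ≤ r - 1)
    (hpr : Rc + nr = 𝔫) (hpc : Cc + nc = 𝔫)
    (hrow : nr * (𝔫 - (r - 1)) ≤ N) (hcol : nc * (𝔫 - (r - 1)) ≤ N)
    (hsub : nr * nc ≤ N + Zc) (hZc : Zc ≤ du)
    (hdw : dw = Rc * 𝔫 + (Cc * 𝔫 + du)) (hdwD : dw ≤ D) :
    sInf (lbSet 𝔫 r D) ≤ (N : ℤ) := by
  have hnrge : 𝔫 - r + 1 ≤ nr := by omega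
  have hnrle : nr ≤ 𝔫 := by omega
  have hncge : 𝔫 - r + 1 ≤ nc := by omega
  have hncle : nc ≤ 𝔫 := by omega
  have hmem : (max ((𝔫 : ℤ) ^ 2 - (D : ℤ) + ((𝔫 : ℤ) - (nr : ℤ)) * ((𝔫 : ℤ) - (nc : ℤ)))
      (max ((nr : ℤ) * ((𝔫 : ℤ) - (r : ℤ) + 1)) ((nc : ℤ) * ((𝔫 : ℤ) - (r : ℤ) + 1))))
      ∈ lbSet 𝔫 r D := ⟨nr, nc, hnrge, hnrle, hncge, hncle, rfl⟩
  have hbdd : BddBelow (lbSet 𝔫 r D) := by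
    refine ⟨0, fun m hm => ?_⟩
    obtain ⟨nr', nc', h1, h2, h3, h4, rfl⟩ := hm
    have h5 : (0 : ℤ) ≤ (nr' : ℤ) * ((𝔫 : ℤ) - (r : ℤ) + 1) := by
      refine mul_nonneg (by positivity) ?_
      omega
    exact le_trans h5 (le_trans (le_max_left _ _) (le_max_right _ _))
  refine le_trans (csInf_le hbdd hmem) ?_
  have hδcast : ((𝔫 - (r - 1) : ℕ) : ℤ) = (𝔫 : ℤ) - (r : ℤ) + 1 := by omega
  refine max_le ?_ (max_le ?_ ?_)
  · have b1 : ((nr * nc : ℕ) : ℤ) ≤ (N : ℤ) + (Zc : ℤ) := by exact_mod_cast hsub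
    push_cast at b1
    have b2 : (Zc : ℤ) ≤ (du : ℤ) := by exact_mod_cast hZc
    have b3 : (Rc : ℤ) = (𝔫 : ℤ) - (nr : ℤ) := by omega
    have b4 : (Cc : ℤ) = (𝔫 : ℤ) - (nc : ℤ) := by omega
    have b5 : ((Rc * 𝔫 + (Cc * 𝔫 + du) : ℕ) : ℤ) ≤ (D : ℤ) := by
      exact_mod_cast hdw ▸ hdwD
    push_cast at b5
    nlinarith [b1, b2, b3, b4, b5]
  · calc (nr : ℤ) * ((𝔫 : ℤ) - (r : ℤ) + 1) = (nr : ℤ) * ((𝔫 - (r - 1) : ℕ) : ℤ) := by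
          rw [hδcast]
      _ = ((nr * (𝔫 - (r - 1)) : ℕ) : ℤ) := by push_cast; ring
      _ ≤ (N : ℤ) := by exact_mod_cast hrow
  · calc (nc : ℤ) * ((𝔫 : ℤ) - (r : ℤ) + 1) = (nc : ℤ) * ((𝔫 - (r - 1) : ℕ) : ℤ) := by
          rw [hδcast]
      _ = ((nc * (𝔫 - (r - 1)) : ℕ) : ℤ) := by push_cast; ring
      _ ≤ (N : ℤ) := by exact_mod_cast hcol


section Key

open scoped Polynomial.Bivariate

lemma key_lemma (p e : ℕ) (hp : p.Prime) (he : 0 < e)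
    (F : Type*) [Field F] [Fintype F] [CharP F p]
    (f : F[X])
    (hflin : ∀ m ∈ f.support, ∃ i : ℕ, m = (p ^ e) ^ i)
    (hdeg : 1 < f.natDegree)
    (ha0 : f.coeff 1 ≠ 0) (ha1 : f.coeff 1 ≠ 1)
    (g : F[X]) (hg : g = X - f)
    (hfs : f.Splits) (hgs : g.Splits)
    (r : ℕ) (hr : 1 ≤ r) (hrn : r ≤ f.natDegree) :
    ∀ D : ℕ, ∀ w ∈ Submodule.span F (Bset f g r), w ≠ 0 → w.natDegree ≤ D →
      sInf (lbSet f.natDegree r D) ≤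
        ((((rootSumSet f g).filter fun α => w.eval α ≠ 0)).card : ℤ) := by
  intro D w hwspan hw0 hwD
  -- ## basic facts about f and g
  have hfne : f ≠ 0 := fun h => by simp [h] at hdeg
  have hgdeg : g.natDegree = f.natDegree := by
    rw [hg, show (X : F[X]) - f = -(f - X) by ring, natDegree_neg,
      natDegree_sub_eq_left_of_natDegree_lt (by simpa using hdeg)]
  have hgne : g ≠ 0 := fun h => by rw [h, natDegree_zero] at hgdeg; omega
  have hfsep : f.Separable := by
    rw [Polynomial.separable_def, aux_deriv hp he f hflin]
    exact ⟨0, C (f.coeff 1)⁻¹, by rw [zero_mul, zero_add, ← C_mul, inv_mul_cancel₀ ha0, C_1]⟩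
  have hgsep : g.Separable := by
    have hgderiv : derivative g = C (1 - f.coeff 1) := by
      rw [hg, derivative_sub, derivative_X, aux_deriv hp he f hflin, ← C_1, ← C_sub]
    have h1 : (1 : F) - f.coeff 1 ≠ 0 := sub_ne_zero.2 (Ne.symm ha1)
    rw [Polynomial.separable_def, hgderiv]
    exact ⟨0, C (1 - f.coeff 1)⁻¹, by rw [zero_mul, zero_add, ← C_mul, inv_mul_cancel₀ h1, C_1]⟩
  set 𝔫 := f.natDegree with h𝔫
  set Zf := f.roots.toFinset with hZfdef
  set Zg := g.roots.toFinset with hZgdef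
  have hZfcard : Zf.card = 𝔫 := by
    rw [hZfdef, Multiset.toFinset_card_of_nodup (nodup_roots hfsep),
      splits_iff_card_roots.1 hfs]
  have hZgcard : Zg.card = 𝔫 := by
    rw [hZgdef, Multiset.toFinset_card_of_nodup (nodup_roots hgsep),
      splits_iff_card_roots.1 hgs, hgdeg]
  have hfroot : ∀ β ∈ Zf, f.eval β = 0 := fun β hβ =>
    (Polynomial.mem_roots hfne).1 (Multiset.mem_toFinset.1 hβ)
  have hgroot : ∀ γ ∈ Zg, g.eval γ = 0 := fun γ hγ =>
    (Polynomial.mem_roots hgne).1 (Multiset.mem_toFinset.1 hγ)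
  have hfg : ∀ γ ∈ Zg, f.eval γ = γ := by
    intro γ hγ
    have := hgroot γ hγ
    rw [hg, eval_sub, eval_X, sub_eq_zero] at this
    exact this.symm
  have hfadd := aux_additive hp f hflin
  have hfsum : ∀ β ∈ Zf, ∀ γ ∈ Zg, f.eval (β + γ) = γ := fun β hβ γ hγ => by
    rw [hfadd, hfroot β hβ, hfg γ hγ, zero_add]
  have hgsum : ∀ β ∈ Zf, ∀ γ ∈ Zg, g.eval (β + γ) = β := fun β hβ γ hγ => by
    rw [hg, eval_sub, eval_X, hfsum β hβ γ hγ, add_sub_cancel_right]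
  have hinj : Set.InjOn (fun q : F × F => q.1 + q.2) ↑(Zf ×ˢ Zg) := by
    intro q hq q' hq' hsum
    rw [Finset.mem_coe, Finset.mem_product] at hq hq'
    simp only at hsum
    have h2 : q.2 = q'.2 := by
      rw [← hfsum _ hq.1 _ hq.2, ← hfsum _ hq'.1 _ hq'.2, hsum]
    have h1 : q.1 = q'.1 := by
      have := hsum
      rw [h2] at this
      exact add_right_cancel this
    exact Prod.ext h1 h2
  -- ## representation of w by a coefficient matrix
  have hBset : Bset f g r =
      Set.range (fun ij : Fin r × Fin r => g ^ (ij.1 : ℕ) * f ^ (ij.2 : ℕ)) := by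
    ext u
    constructor
    · rintro ⟨i, j, hi, hj, rfl⟩; exact ⟨(⟨i, hi⟩, ⟨j, hj⟩), rfl⟩
    · rintro ⟨ij, rfl⟩; exact ⟨ij.1, ij.2, ij.1.2, ij.2.2, rfl⟩
  rw [hBset] at hwspan
  obtain ⟨c, hc⟩ := (Submodule.mem_span_range_iff_exists_fun F).1 hwspan
  -- ## the bivariate polynomial P
  set ψ : F[X] →+* F[X] := eval₂RingHom C g with hψdef
  set Φ : F[X][Y] →+* F[X] := eval₂RingHom ψ f with hΦdef
  set P : F[X][Y] := ∑ ij : Fin r × Fin r,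
      C (C (c ij) * X ^ (ij.1 : ℕ)) * Y ^ (ij.2 : ℕ) with hPdef
  have hwP : Φ P = w := by
    rw [hPdef, map_sum, ← hc]
    refine Finset.sum_congr rfl fun ij _ => ?_
    rw [hΦdef, coe_eval₂RingHom, eval₂_mul, eval₂_C, eval₂_X_pow, hψdef, coe_eval₂RingHom,
      eval₂_mul, eval₂_C, eval₂_X_pow, smul_eq_C_mul]
    ring
  have hP0 : P ≠ 0 := fun h => hw0 (by rw [← hwP, h, map_zero])
  have hcoeffdeg : ∀ n, (P.coeff n).natDegree ≤ r - 1 := by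
    intro n
    rw [hPdef, finset_sum_coeff]
    refine natDegree_sum_le_of_forall_le _ _ fun ij _ => ?_
    rw [coeff_C_mul, coeff_X_pow]
    split
    · rw [mul_one]
      exact le_trans (natDegree_C_mul_X_pow_le _ _) (by have := ij.1.2; omega)
    · simp
  have hPdeg : P.natDegree ≤ r - 1 := by
    rw [hPdef]
    refine natDegree_sum_le_of_forall_le _ _ fun ij _ => ?_
    exact le_trans (natDegree_C_mul_X_pow_le _ _) (by have := ij.2.2; omega)
  -- ## rows and columns
  set ρ : F → F[X] := fun β => P.map (evalRingHom β) with hρdef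
  set σc : F → F[X] := fun γ => P.eval (C γ) with hσdef
  set Rf := Zf.filter (fun β => ρ β = 0) with hRfdef
  set nrF := Zf.filter (fun β => ρ β ≠ 0) with hnrFdef
  set Cg := Zg.filter (fun γ => σc γ = 0) with hCgdef
  set ncF := Zg.filter (fun γ => σc γ ≠ 0) with hncFdef
  have hrowzero : ∀ β, ρ β = 0 → ∀ n, (P.coeff n).eval β = 0 := by
    intro β hβ n
    have := congrArg (fun q => q.coeff n) hβ
    simpa [hρdef, coeff_map] using this
  have hRfcard : Rf.card ≤ r - 1 := by
    obtain ⟨n0, hn0⟩ : ∃ n, P.coeff n ≠ 0 := by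
      by_contra h
      push_neg at h
      exact hP0 (Polynomial.ext fun n => by simp [h n])
    refine le_trans (aux_card_le_natDegree Rf id (Set.injOn_id _) (P.coeff n0) hn0 ?_)
      (hcoeffdeg n0)
    intro β hβ
    exact hrowzero β (Finset.mem_filter.1 hβ).2 n0
  have hCgcard : Cg.card ≤ r - 1 := by
    refine le_trans (aux_card_le_natDegree Cg (fun γ => (C γ : F[X]))
      (fun x _ y _ h => C_injective h) P hP0 ?_) hPdeg
    intro γ hγ
    exact (Finset.mem_filter.1 hγ).2
  have hpartr : Rf.card + nrF.card = 𝔫 := by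
    rw [← hZfcard, hRfdef, hnrFdef]
    exact Finset.card_filter_add_card_filter_not (fun β => ρ β = 0)
  have hpartc : Cg.card + ncF.card = 𝔫 := by
    rw [← hZgcard, hCgdef, hncFdef]
    exact Finset.card_filter_add_card_filter_not (fun γ => σc γ = 0)
  -- ## divisibility
  set a : F[X] := ∏ β ∈ Rf, (X - C β) with hadef
  have hane : a ≠ 0 :=
    Finset.prod_ne_zero_iff.2 fun β _ => X_sub_C_ne_zero β
  have haP : (C a : F[X][Y]) ∣ P := by
    have hco : ∀ n, a ∣ P.coeff n := by
      intro n
      refine aux_prod_dvd Rf id (Set.injOn_id _) _ fun β hβ => ?_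
      exact hrowzero β (Finset.mem_filter.1 hβ).2 n
    conv_rhs => rw [P.as_sum_support_C_mul_X_pow]
    refine Finset.dvd_sum fun n hn => ?_
    obtain ⟨u, hu⟩ := hco n
    exact ⟨C u * X ^ n, by rw [hu, map_mul, mul_assoc]⟩
  obtain ⟨P₂, hP₂⟩ := haP
  have hP₂root : ∀ γ ∈ Cg, P₂.eval (C γ) = 0 := by
    intro γ hγ
    have h0 : σc γ = 0 := (Finset.mem_filter.1 hγ).2
    rw [hσdef] at h0
    simp only at h0
    rw [hP₂, eval_mul, eval_C] at h0
    exact (mul_eq_zero.1 h0).resolve_left hane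
  obtain ⟨U, hU⟩ := aux_prod_dvd Cg (fun γ => (C γ : F[X]))
    (fun x _ y _ h => C_injective h) P₂ hP₂root
  have hPfact : P = C a * ((∏ γ ∈ Cg, (Y - C (C γ))) * U) := by rw [hP₂, hU]
  -- ## pushing the factorization through Φ
  have hΦC : ∀ t : F[X], Φ (C t) = ψ t := fun t => by
    rw [hΦdef, coe_eval₂RingHom, eval₂_C]
  have hψsub : ∀ β : F, ψ (X - C β) = g - C β := fun β => by
    rw [hψdef, map_sub, coe_eval₂RingHom, eval₂_X, eval₂_C]
  have hψC : ∀ t : F, ψ (C t) = C t := fun t => by rw [hψdef, coe_eval₂RingHom, eval₂_C]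
  set u : F[X] := Φ U with hudef
  have hwfact : w = (∏ β ∈ Rf, (g - C β)) * ((∏ γ ∈ Cg, (f - C γ)) * u) := by
    rw [← hwP, hPfact, map_mul, map_mul, hΦC, hadef, map_prod]
    congr 1
    · exact Finset.prod_congr rfl fun β _ => hψsub β
    · congr 1
      rw [map_prod]
      refine Finset.prod_congr rfl fun γ _ => ?_
      rw [map_sub, hΦdef, coe_eval₂RingHom, eval₂_X, eval₂_C, hψC]
  have hu0 : u ≠ 0 := fun h => hw0 (by rw [hwfact, h, mul_zero, mul_zero])
  have hgβne : ∀ β : F, g - C β ≠ 0 := by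
    intro β h
    have := natDegree_sub_C (p := g) (a := β)
    rw [h, natDegree_zero] at this
    omega
  have hfγne : ∀ γ : F, f - C γ ≠ 0 := by
    intro γ h
    have := natDegree_sub_C (p := f) (a := γ)
    rw [h, natDegree_zero] at this
    omega
  have hdegw : w.natDegree = Rf.card * 𝔫 + (Cg.card * 𝔫 + u.natDegree) := by
    rw [hwfact, natDegree_mul (Finset.prod_ne_zero_iff.2 fun β _ => hgβne β)
        (mul_ne_zero (Finset.prod_ne_zero_iff.2 fun γ _ => hfγne γ) hu0),
      natDegree_mul (Finset.prod_ne_zero_iff.2 fun γ _ => hfγne γ) hu0,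
      natDegree_prod _ _ (fun β _ => hgβne β), natDegree_prod _ _ (fun γ _ => hfγne γ)]
    have h1 : ∀ β : F, (g - C β).natDegree = 𝔫 := fun β => by rw [natDegree_sub_C, hgdeg]
    have h2 : ∀ γ : F, (f - C γ).natDegree = 𝔫 := fun γ => by rw [natDegree_sub_C]
    rw [Finset.sum_congr rfl fun β _ => h1 β, Finset.sum_congr rfl fun γ _ => h2 γ,
      Finset.sum_const, Finset.sum_const, smul_eq_mul, smul_eq_mul]
  -- ## evaluation bridge
  have hQE : ∀ Q : F[X][Y], ∀ β ∈ Zf, ∀ γ ∈ Zg, (Φ Q).eval (β + γ) = Q.evalEval β γ := by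
    intro Q β hβ γ hγ
    have h1 : (Φ Q).eval (β + γ)
        = Q.eval₂ ((evalRingHom (β + γ)).comp ψ) (f.eval (β + γ)) := by
      rw [hΦdef, coe_eval₂RingHom, ← coe_evalRingHom, hom_eval₂]
    have h2 : (evalRingHom (β + γ)).comp ψ = evalRingHom β := by
      refine RingHom.ext fun s => ?_
      show evalRingHom (β + γ) (eval₂ C g s) = eval β s
      rw [hom_eval₂]
      have h3 : (evalRingHom (β + γ)).comp C = RingHom.id F := RingHom.ext fun t => by simp
      rw [h3, coe_evalRingHom, hgsum β hβ γ hγ]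
      rfl
    rw [h1, h2, hfsum β hβ γ hγ]
    exact congrFun (congrFun (eval₂_evalRingHom β) γ) Q
  -- ## counting nonzero evaluations
  set N := ((Zf ×ˢ Zg).filter fun q : F × F => P.evalEval q.1 q.2 ≠ 0).card with hNdef
  have hcard_goal : ((rootSumSet f g).filter fun α => w.eval α ≠ 0).card = N := by
    have himg : rootSumSet f g = (Zf ×ˢ Zg).image fun q => q.1 + q.2 := rfl
    rw [himg, Finset.filter_image,
      Finset.card_image_of_injOn (hinj.mono (Finset.coe_subset.2 (Finset.filter_subset _ _))),
      hNdef]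
    congr 1
    refine Finset.filter_congr fun q hq => ?_
    rw [Finset.mem_product] at hq
    rw [← hwP, hQE P q.1 hq.1 q.2 hq.2]
  have hNrow : N = ∑ β ∈ Zf, ((Zg.filter fun γ => P.evalEval β γ ≠ 0)).card := by
    rw [hNdef, Finset.card_filter, Finset.sum_product]
    exact Finset.sum_congr rfl fun β _ => (Finset.card_filter _ _).symm
  have hNcol : N = ∑ γ ∈ Zg, ((Zf.filter fun β => P.evalEval β γ ≠ 0)).card := by
    rw [hNdef, Finset.card_filter, Finset.sum_product_right]
    exact Finset.sum_congr rfl fun γ _ => (Finset.card_filter _ _).symm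
  have hrowbound : ∀ β ∈ nrF, 𝔫 - (r - 1) ≤ (Zg.filter fun γ => P.evalEval β γ ≠ 0).card := by
    intro β hβ
    have hzb : (Zg.filter fun γ => P.evalEval β γ = 0).card ≤ r - 1 := by
      refine le_trans (aux_card_le_natDegree _ id (Set.injOn_id _) (ρ β)
        (Finset.mem_filter.1 hβ).2 ?_) (le_trans natDegree_map_le hPdeg)
      intro γ hγ
      have h1 := (Finset.mem_filter.1 hγ).2
      rw [hρdef]
      simp only [id]
      rw [map_evalRingHom_eval]
      exact h1
    have hsplit := Finset.card_filter_add_card_filter_not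
      (s := Zg) (p := fun γ => P.evalEval β γ = 0)
    simp only [ne_eq]
    omega
  have hσdeg : ∀ γ : F, (σc γ).natDegree ≤ r - 1 := by
    intro γ
    rw [hσdef]
    simp only
    conv_lhs => rw [P.as_sum_support_C_mul_X_pow]
    rw [eval_finset_sum]
    refine natDegree_sum_le_of_forall_le _ _ fun n _ => ?_
    rw [eval_mul, eval_C, eval_pow, eval_X]
    refine le_trans (natDegree_mul_le) ?_
    rw [← C_pow, natDegree_C, add_zero]
    exact hcoeffdeg n
  have hcolbound : ∀ γ ∈ ncF, 𝔫 - (r - 1) ≤ (Zf.filter fun β => P.evalEval β γ ≠ 0).card := by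
    intro γ hγ
    have hzb : (Zf.filter fun β => P.evalEval β γ = 0).card ≤ r - 1 := by
      refine le_trans (aux_card_le_natDegree _ id (Set.injOn_id _) (σc γ)
        (Finset.mem_filter.1 hγ).2 ?_) (hσdeg γ)
      intro β hβ
      exact (Finset.mem_filter.1 hβ).2
    have hsplit := Finset.card_filter_add_card_filter_not
      (s := Zf) (p := fun β => P.evalEval β γ = 0)
    simp only [ne_eq]
    omega
  have hNrowge : nrF.card * (𝔫 - (r - 1)) ≤ N := by
    rw [hNrow]
    calc nrF.card * (𝔫 - (r - 1)) = ∑ _β ∈ nrF, (𝔫 - (r - 1)) := by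
          rw [Finset.sum_const, smul_eq_mul]
      _ ≤ ∑ β ∈ nrF, (Zg.filter fun γ => P.evalEval β γ ≠ 0).card :=
          Finset.sum_le_sum hrowbound
      _ ≤ ∑ β ∈ Zf, (Zg.filter fun γ => P.evalEval β γ ≠ 0).card :=
          Finset.sum_le_sum_of_subset (Finset.filter_subset _ _)
  have hNcolge : ncF.card * (𝔫 - (r - 1)) ≤ N := by
    rw [hNcol]
    calc ncF.card * (𝔫 - (r - 1)) = ∑ _γ ∈ ncF, (𝔫 - (r - 1)) := by
          rw [Finset.sum_const, smul_eq_mul]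
      _ ≤ ∑ γ ∈ ncF, (Zf.filter fun β => P.evalEval β γ ≠ 0).card :=
          Finset.sum_le_sum hcolbound
      _ ≤ ∑ γ ∈ Zg, (Zf.filter fun β => P.evalEval β γ ≠ 0).card :=
          Finset.sum_le_sum_of_subset (Finset.filter_subset _ _)
  -- ## the subgrid of zero points
  set Zsub := (nrF ×ˢ ncF).filter (fun q : F × F => P.evalEval q.1 q.2 = 0) with hZsubdef
  have hZsubgrid : Zsub ⊆ Zf ×ˢ Zg :=
    le_trans (Finset.filter_subset _ _)
      (Finset.product_subset_product (Finset.filter_subset _ _) (Finset.filter_subset _ _))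
  have hZsubroot : ∀ q ∈ Zsub, u.eval (q.1 + q.2) = 0 := by
    intro q hq
    obtain ⟨hqm, hq0⟩ := Finset.mem_filter.1 hq
    obtain ⟨hq1, hq2⟩ := Finset.mem_product.1 hqm
    have hβZ : q.1 ∈ Zf := (Finset.mem_filter.1 hq1).1
    have hγZ : q.2 ∈ Zg := (Finset.mem_filter.1 hq2).1
    have heq : P.evalEval q.1 q.2
        = a.eval q.1 * ((∏ γ ∈ Cg, (q.2 - γ)) * U.evalEval q.1 q.2) := by
      rw [hPfact, evalEval_mul, evalEval_mul, evalEval_C]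
      congr 2
      rw [evalEval_prod]
      refine Finset.prod_congr rfl fun γ _ => ?_
      rw [evalEval_sub, evalEval_X, evalEval_CC]
    have ha1 : a.eval q.1 ≠ 0 := by
      rw [hadef, eval_prod]
      refine Finset.prod_ne_zero_iff.2 fun β hβ => ?_
      simp only [eval_sub, eval_X, eval_C]
      refine sub_ne_zero.2 fun hEq => ?_
      have hρ1 : ρ q.1 ≠ 0 := (Finset.mem_filter.1 hq1).2
      have hρ2 : ρ β = 0 := (Finset.mem_filter.1 hβ).2
      rw [hEq] at hρ1
      exact hρ1 hρ2
    have ha2 : (∏ γ ∈ Cg, (q.2 - γ)) ≠ 0 := by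
      refine Finset.prod_ne_zero_iff.2 fun γ hγ => ?_
      refine sub_ne_zero.2 fun hEq => ?_
      have hσ1 : σc q.2 ≠ 0 := (Finset.mem_filter.1 hq2).2
      have hσ2 : σc γ = 0 := (Finset.mem_filter.1 hγ).2
      rw [hEq] at hσ1
      exact hσ1 hσ2
    have hU0 : U.evalEval q.1 q.2 = 0 := by
      rw [heq] at hq0
      rcases mul_eq_zero.1 hq0 with h | h
      · exact absurd h ha1
      rcases mul_eq_zero.1 h with h' | h'
      · exact absurd h' ha2
      · exact h'
    rw [hudef, hQE U q.1 hβZ q.2 hγZ]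
    exact hU0
  have hZsubcard : Zsub.card ≤ u.natDegree :=
    aux_card_le_natDegree Zsub (fun q => q.1 + q.2)
      (hinj.mono (Finset.coe_subset.2 hZsubgrid)) u hu0 hZsubroot
  have hNsub : nrF.card * ncF.card ≤ N + Zsub.card := by
    have h1 := Finset.card_filter_add_card_filter_not
      (s := nrF ×ˢ ncF) (p := fun q : F × F => P.evalEval q.1 q.2 = 0)
    have h2 : ((nrF ×ˢ ncF).filter fun q : F × F => ¬ P.evalEval q.1 q.2 = 0).card ≤ N := by
      refine Finset.card_le_card (Finset.filter_subset_filter _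
        (Finset.product_subset_product (Finset.filter_subset _ _) (Finset.filter_subset _ _)))
    rw [Finset.card_product, ← hZsubdef] at h1
    omega
  -- ## final arithmetic
  rw [hcard_goal]
  exact aux_arith 𝔫 r D N Rf.card Cg.card nrF.card ncF.card Zsub.card u.natDegree w.natDegree
    hr hrn hRfcard hCgcard hpartr hpartc hNrowge hNcolge hNsub hZsubcard hdegw hwD

end Key

/-- main lower bound.  Under the construction setup with `1 ≤ r ≤ 𝔫`
and `δ := 𝔫 − r + 1`, every nonzero `w ∈ span_F(B_{r²})` with `deg w ≤ ∂` has at least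
`min { B(∂, n_r, n_c) : δ ≤ n_r, n_c ≤ 𝔫 }` nonzero values on `Z_f ⊕ Z_g`; in particular
the evaluation code on `Z_f ⊕ Z_g` of the polynomials in `span_F(B_{r²})` of degree at
most `∂` has minimum distance at least this minimum. -/
theorem stmt_11 (p e : ℕ) (hp : p.Prime) (he : 0 < e)
    (F : Type*) [Field F] [Fintype F] [CharP F p]
    (f : F[X])
    (hflin : ∀ m ∈ f.support, ∃ i : ℕ, m = (p ^ e) ^ i)
    (hdeg : 1 < f.natDegree)
    (ha0 : f.coeff 1 ≠ 0) (ha1 : f.coeff 1 ≠ 1)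
    (g : F[X]) (hg : g = X - f)
    (hfs : f.Splits) (hgs : g.Splits)
    (r : ℕ) (hr : 1 ≤ r) (hrn : r ≤ f.natDegree) :
    (∀ D : ℕ, ∀ w ∈ Submodule.span F (Bset f g r), w ≠ 0 → w.natDegree ≤ D →
      sInf (lbSet f.natDegree r D) ≤
        ((((rootSumSet f g).filter fun α => w.eval α ≠ 0)).card : ℤ)) ∧
    (∀ D : ℕ, ∀ v ∈ Submodule.map (evalOn (rootSumSet f g))
        (Submodule.span F (Bset f g r) ⊓ Polynomial.degreeLE F (D : WithBot ℕ)),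
      v ≠ 0 →
      sInf (lbSet f.natDegree r D) ≤
        ((Finset.univ.filter fun α : ↥(rootSumSet f g) => v α ≠ 0).card : ℤ)) := by
  refine ⟨key_lemma p e hp he F f hflin hdeg ha0 ha1 g hg hfs hgs r hr hrn, ?_⟩
  intro D v hv hv0
  obtain ⟨w, hw, rfl⟩ := hv
  obtain ⟨hwspan, hwdeg⟩ := hw
  have hw0 : w ≠ 0 := by rintro rfl; exact hv0 (map_zero _)
  have hdegw : w.natDegree ≤ D :=
    natDegree_le_iff_degree_le.2 (Polynomial.mem_degreeLE.1 hwdeg)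
  have hmain := key_lemma p e hp he F f hflin hdeg ha0 ha1 g hg hfs hgs r hr hrn
    D w hwspan hw0 hdegw
  have hcard : (Finset.univ.filter
        fun α : ↥(rootSumSet f g) => (evalOn (rootSumSet f g)) w α ≠ 0).card
      = ((rootSumSet f g).filter fun α => w.eval α ≠ 0).card := by
    refine Finset.card_bij (fun a _ => (a : F)) ?_ ?_ ?_
    · intro a ha
      rw [Finset.mem_filter] at ha ⊢
      refine ⟨a.2, ?_⟩
      have := ha.2
      simpa [evalOn, leval_apply] using this
    · intro a _ b _ h
      exact Subtype.ext h
    · intro b hb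
      rw [Finset.mem_filter] at hb
      exact ⟨⟨b, hb.1⟩, Finset.mem_filter.2 ⟨Finset.mem_univ _,
        by simpa [evalOn, leval_apply] using hb.2⟩, rfl⟩
  rw [hcard]
  exact hmain
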